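/- Fix integers r ≥ 2 and 0 ≤ n_1 ≤ n_2 ≤ … ≤ n_r = n, and set V_i = ℂ^{n_i}, V_0 = 0. Let α = (α_1, …, α_{r−1}) be a tuple of linear maps α_i : V_i → V_{i+1} (complex n_{i+1}×n_i matrices), and set α_0 = 0. The group SL = ∏_{i=1}^{r−1} SL(n_i,ℂ) acts by α_i ↦ g_{i+1} α_i g_i⁻¹ for i = 1,…,r−2 and α_{r−1} ↦ α_{r−1} g_{r−1}⁻¹. If the SL-orbit of α is a closed subset of the product matrix space, then for each i = 1,…,r−1 at least one of the following holds: (1) α_i is injective, or (2) V_i is the internal direct sum of the range of α_{i−1} and ker α_i, or (3) α_{i−1} is surjective. -/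

import Mathlib

open Matrix Module Submodule

set_option maxHeartbeats 1000000
set_option synthInstance.maxHeartbeats 400000
set_option linter.unusedVariables false

private lemma aux {m j : ℕ} (hj : j < m) {dims : ℕ → ℕ}
    (α : ∀ i : ℕ, Matrix (Fin (dims (i+1))) (Fin (dims i)) ℂ)
    (hclosed : IsClosed {A : ∀ i : ℕ, Matrix (Fin (dims (i+1))) (Fin (dims i)) ℂ |
        ∃ g : ∀ i : ℕ, Matrix.SpecialLinearGroup (Fin (dims i)) ℂ,
          g (m+1) = 1 ∧
          (∀ i ≤ m, A i = (↑(g (i+1)) : Matrix (Fin (dims (i+1))) (Fin (dims (i+1))) ℂ) *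
              α i * (↑((g i)⁻¹) : Matrix (Fin (dims i)) (Fin (dims i)) ℂ)) ∧
          (∀ i, m + 1 ≤ i → A i = α i)})
    (Vp W : Submodule ℂ (Fin (dims (j+1)) → ℂ))
    (hVW : Vp ≤ W) (hWtop : W ≠ ⊤) (hVpbot : Vp ≠ ⊥)
    (hVK : Vp ≤ LinearMap.ker (α (j+1)).mulVecLin)
    (hRW : LinearMap.range (α j).mulVecLin ≤ W) :
    ∃ Q : Matrix (Fin (dims (j+1))) (Fin (dims (j+1))) ℂ,
      (Q * α j).rank = (α j).rank ∧
      ((α (j+1)) * Q).rank = (α (j+1)).rank ∧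
      Vp ≤ LinearMap.ker Q.mulVecLin ∧
      Q.rank + finrank ℂ Vp ≤ finrank ℂ W := by
  classical
  obtain ⟨Vm, hVm⟩ := W.exists_isCompl
  obtain ⟨C, hC⟩ := Vp.exists_isCompl
  set V0 : Submodule ℂ (Fin (dims (j+1)) → ℂ) := W ⊓ C with hV0def
  have hsup : Vp ⊔ V0 = W := by
    rw [hV0def, inf_comm, ← sup_inf_assoc_of_le C hVW, codisjoint_iff.mp hC.codisjoint, top_inf_eq]
  have hdisj : Vp ⊓ V0 = ⊥ := by
    rw [hV0def]
    exact le_bot_iff.mp (le_trans (inf_le_inf_left _ inf_le_right) (disjoint_iff.mp hC.disjoint).le)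
  have hdims : finrank ℂ Vp + finrank ℂ V0 = finrank ℂ W := by
    have := Submodule.finrank_sup_add_finrank_inf_eq Vp V0
    rw [hsup, hdisj, finrank_bot] at this
    omega
  set s := finrank ℂ Vm with hsdef
  set pp := finrank ℂ Vp with hppdef
  set qq := finrank ℂ V0 with hqqdef
  let e1 := Module.finBasis ℂ Vp
  let e2 := Module.finBasis ℂ V0
  let e3 := Module.finBasis ℂ Vm
  let f : (Fin pp ⊕ Fin qq) ⊕ Fin s
      → (Fin (dims (j+1)) → ℂ) :=
    Sum.elim (Sum.elim (fun k => Vp.subtype (e1 k)) (fun k => V0.subtype (e2 k)))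
      (fun k => Vm.subtype (e3 k))
  have hsp : ∀ (U : Submodule ℂ (Fin (dims (j+1)) → ℂ)) (e : Basis (Fin (finrank ℂ U)) ℂ U),
      span ℂ (Set.range fun k => U.subtype (e k)) = U := by
    intro U e
    rw [show (fun k => U.subtype (e k)) = (U.subtype ∘ e) from rfl,
      Set.range_comp, Submodule.span_image, Basis.span_eq, Submodule.map_top,
      Submodule.range_subtype]
  have htop : ⊤ ≤ span ℂ (Set.range f) := by
    rw [show f = Sum.elim (Sum.elim _ _) _ from rfl, Set.Sum.elim_range, Set.Sum.elim_range,
      Submodule.span_union, Submodule.span_union, hsp Vp e1, hsp V0 e2, hsp Vm e3, hsup,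
      codisjoint_iff.mp hVm.codisjoint]
  have hcard : Fintype.card ((Fin pp ⊕ Fin qq)
      ⊕ Fin s) = finrank ℂ (Fin (dims (j+1)) → ℂ) := by
    have h2 := Submodule.finrank_add_eq_of_isCompl hVm
    simp only [Fintype.card_sum, Fintype.card_fin]
    omega
  let b := basisOfTopLeSpanOfCardEqFinrank f htop hcard
  have hb : ⇑b = f := coe_basisOfTopLeSpanOfCardEqFinrank f htop hcard
  -- the family of "diagonal in basis b" endomorphisms
  let L : (((Fin pp ⊕ Fin qq) ⊕ Fin s) → ℂ)
      → ((Fin (dims (j+1)) → ℂ) →ₗ[ℂ] (Fin (dims (j+1)) → ℂ)) :=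
    fun c => b.constr ℂ (fun i => c i • b i)
  have hLb : ∀ c i, L c (b i) = c i • b i := by
    intro c i; simp only [L, Basis.constr_basis]
  have hLcomp : ∀ c c', L c ∘ₗ L c' = L (fun i => c' i * c i) := by
    intro c c'
    refine b.ext fun i => ?_
    simp only [LinearMap.comp_apply, hLb, LinearMap.map_smul, smul_smul]
  have hLone : L (fun _ => 1) = LinearMap.id := by
    refine b.ext fun i => ?_
    simp only [hLb, one_smul, LinearMap.id_apply]
  have hdiag : ∀ c, LinearMap.toMatrix b b (L c) = Matrix.diagonal c := by
    intro c
    ext i k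
    rw [LinearMap.toMatrix_apply, hLb, LinearEquiv.map_smul, Basis.repr_self]
    by_cases h : i = k
    · subst h; simp [Matrix.diagonal_apply]
    · simp [Matrix.diagonal_apply, h, Finsupp.single_apply, Ne.symm h]
  have hdet : ∀ c, (LinearMap.toMatrix' (L c)).det = ∏ i, c i := by
    intro c
    rw [LinearMap.det_toMatrix', ← LinearMap.det_toMatrix b, hdiag, Matrix.det_diagonal]
  -- the weights
  let dD : ℂ → (((Fin pp ⊕ Fin qq) ⊕ Fin s) → ℂ) :=
    fun t => Sum.elim (Sum.elim (fun _ => t ^ s) (fun _ => (1:ℂ))) (fun _ => (t ^ pp)⁻¹)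
  let dDinv : ℂ → (((Fin pp ⊕ Fin qq) ⊕ Fin s) → ℂ) :=
    fun t => Sum.elim (Sum.elim (fun _ => (t ^ s)⁻¹) (fun _ => (1:ℂ))) (fun _ => t ^ pp)
  have hprodD : ∀ t : ℂ, t ≠ 0 → ∏ i, dD t i = 1 := by
    intro t ht
    simp only [dD, Fintype.prod_sum_type, Sum.elim_inl, Sum.elim_inr, Finset.prod_const,
      Finset.card_univ, Fintype.card_fin, one_pow, mul_one, inv_pow, ← pow_mul]
    rw [mul_comm pp s]
    exact mul_inv_cancel₀ (pow_ne_zero _ ht)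
  have hprodDinv : ∀ t : ℂ, t ≠ 0 → ∏ i, dDinv t i = 1 := by
    intro t ht
    simp only [dDinv, Fintype.prod_sum_type, Sum.elim_inl, Sum.elim_inr, Finset.prod_const,
      Finset.card_univ, Fintype.card_fin, one_pow, mul_one, inv_pow, ← pow_mul]
    rw [mul_comm pp s]
    exact inv_mul_cancel₀ (pow_ne_zero _ ht)
  have hmulDinvD : ∀ t : ℂ, t ≠ 0 → ∀ i, dD t i * dDinv t i = 1 := by
    intro t ht i
    rcases i with (k | k) | k
    · exact mul_inv_cancel₀ (pow_ne_zero _ ht)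
    · exact mul_one 1
    · exact inv_mul_cancel₀ (pow_ne_zero _ ht)
  -- projection weight vectors
  let c1 : ((Fin pp ⊕ Fin qq) ⊕ Fin s) → ℂ :=
    Sum.elim (Sum.elim (fun _ => 1) (fun _ => 0)) (fun _ => 0)
  let c2 : ((Fin pp ⊕ Fin qq) ⊕ Fin s) → ℂ :=
    Sum.elim (Sum.elim (fun _ => 0) (fun _ => 1)) (fun _ => 0)
  let c3 : ((Fin pp ⊕ Fin qq) ⊕ Fin s) → ℂ :=
    Sum.elim (Sum.elim (fun _ => 0) (fun _ => 0)) (fun _ => 1)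
  have hbi : ∀ i, b i = f i := fun i => congrFun hb i
  have hLf : ∀ c i, L c (f i) = c i • f i := by
    intro c i
    rw [← hbi, hLb, hbi]
  -- decompositions of the one-parameter subgroup
  have hdDdecomp : ∀ t : ℂ, L (dD t) = t ^ s • L c1 + L c2 + (t ^ pp)⁻¹ • L c3 := by
    intro t
    refine b.ext fun i => ?_
    rcases i with (k | k) | k <;>
      simp [hLb, dD, c1, c2, c3, LinearMap.add_apply, LinearMap.smul_apply, smul_smul]
  have hdDinvdecomp : ∀ t : ℂ, L (dDinv t) = (t ^ s)⁻¹ • L c1 + L c2 + t ^ pp • L c3 := by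
    intro t
    refine b.ext fun i => ?_
    rcases i with (k | k) | k <;>
      simp [hLb, dDinv, c1, c2, c3, LinearMap.add_apply, LinearMap.smul_apply, smul_smul]
  -- kernel and range facts
  have hVple : ∀ c : ((Fin pp ⊕ Fin qq) ⊕ Fin s) → ℂ,
      (∀ k, c (Sum.inl (Sum.inl k)) = 0) → Vp ≤ LinearMap.ker (L c) := by
    intro c h
    rw [← hsp Vp e1]
    refine span_le.mpr ?_
    rintro v ⟨k, rfl⟩
    simp only [SetLike.mem_coe, LinearMap.mem_ker]
    rw [show Vp.subtype (e1 k) = f (Sum.inl (Sum.inl k)) from rfl, hLf, h, zero_smul]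
  have hV0le : ∀ c : ((Fin pp ⊕ Fin qq) ⊕ Fin s) → ℂ,
      (∀ k, c (Sum.inl (Sum.inr k)) = 0) → V0 ≤ LinearMap.ker (L c) := by
    intro c h
    rw [← hsp V0 e2]
    refine span_le.mpr ?_
    rintro v ⟨k, rfl⟩
    simp only [SetLike.mem_coe, LinearMap.mem_ker]
    rw [show V0.subtype (e2 k) = f (Sum.inl (Sum.inr k)) from rfl, hLf, h, zero_smul]
  have hWle : W ≤ LinearMap.ker (L c3) := by
    rw [← hsup]
    exact sup_le (hVple c3 fun k => rfl) (hV0le c3 fun k => rfl)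
  have hrangeLc1 : LinearMap.range (L c1) ≤ Vp := by
    rw [show L c1 = b.constr ℂ (fun i => c1 i • b i) from rfl, Basis.constr_range]
    refine span_le.mpr ?_
    rintro v ⟨i, rfl⟩
    rcases i with (k | k) | k
    · simp only [SetLike.mem_coe]
      rw [hbi, show c1 (Sum.inl (Sum.inl k)) = 1 from rfl, one_smul,
        show f (Sum.inl (Sum.inl k)) = Vp.subtype (e1 k) from rfl]
      exact SetLike.coe_mem _
    · simp only [SetLike.mem_coe]
      rw [show c1 (Sum.inl (Sum.inr k)) = 0 from rfl, zero_smul]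
      exact zero_mem _
    · simp only [SetLike.mem_coe]
      rw [show c1 (Sum.inr k) = 0 from rfl, zero_smul]
      exact zero_mem _
  have hrangeLc2 : LinearMap.range (L c2) ≤ V0 := by
    rw [show L c2 = b.constr ℂ (fun i => c2 i • b i) from rfl, Basis.constr_range]
    refine span_le.mpr ?_
    rintro v ⟨i, rfl⟩
    rcases i with (k | k) | k
    · simp only [SetLike.mem_coe]
      rw [show c2 (Sum.inl (Sum.inl k)) = 0 from rfl, zero_smul]
      exact zero_mem _
    · simp only [SetLike.mem_coe]
      rw [hbi, show c2 (Sum.inl (Sum.inr k)) = 1 from rfl, one_smul,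
        show f (Sum.inl (Sum.inr k)) = V0.subtype (e2 k) from rfl]
      exact SetLike.coe_mem _
    · simp only [SetLike.mem_coe]
      rw [show c2 (Sum.inr k) = 0 from rfl, zero_smul]
      exact zero_mem _
  have hc3αj : L c3 ∘ₗ (α j).mulVecLin = 0 := by
    refine LinearMap.ext fun x => ?_
    have : (α j).mulVecLin x ∈ W := hRW (LinearMap.mem_range_self _ x)
    simpa using hWle this
  have hc1αj1 : (α (j+1)).mulVecLin ∘ₗ L c1 = 0 := by
    refine LinearMap.ext fun x => ?_
    have : L c1 x ∈ LinearMap.ker (α (j+1)).mulVecLin :=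
      hVK (hrangeLc1 (LinearMap.mem_range_self _ x))
    simpa using this
  -- composition identities
  have hEA : ∀ t : ℂ, L (dD t) ∘ₗ (α j).mulVecLin
      = (t ^ s • L c1 + L c2) ∘ₗ (α j).mulVecLin := by
    intro t
    refine LinearMap.ext fun x => ?_
    have h3 : L c3 (α j *ᵥ x) = 0 := by
      have := LinearMap.congr_fun hc3αj x
      simpa [Matrix.mulVecLin_apply] using this
    simp [hdDdecomp t, LinearMap.add_apply, LinearMap.smul_apply, Matrix.mulVecLin_apply, h3]
  have hEB : ∀ t : ℂ, (α (j+1)).mulVecLin ∘ₗ L (dDinv t)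
      = (α (j+1)).mulVecLin ∘ₗ (L c2 + t ^ pp • L c3) := by
    intro t
    refine LinearMap.ext fun x => ?_
    have h1 : α (j+1) *ᵥ (L c1 x) = 0 := by
      have := LinearMap.congr_fun hc1αj1 x
      simpa [Matrix.mulVecLin_apply] using this
    simp [hdDinvdecomp t, LinearMap.add_apply, LinearMap.smul_apply, Matrix.mulVecLin_apply,
      Matrix.mulVec_add, Matrix.mulVec_smul, h1]
  have hαjeq : LinearMap.toMatrix' ((α j).mulVecLin) = α j := LinearMap.toMatrix'_toLin' (α j)
  have hαj1eq : LinearMap.toMatrix' ((α (j+1)).mulVecLin) = α (j+1) :=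
    LinearMap.toMatrix'_toLin' (α (j+1))
  have hdetD : ∀ t : ℂ, t ≠ 0 → (LinearMap.toMatrix' (L (dD t))).det = 1 := by
    intro t ht; rw [hdet]; exact hprodD t ht
  have hdetDinv : ∀ t : ℂ, t ≠ 0 → (LinearMap.toMatrix' (L (dDinv t))).det = 1 := by
    intro t ht; rw [hdet]; exact hprodDinv t ht
  -- the path of matrices
  set Fj : ℂ → Matrix (Fin (dims (j+1))) (Fin (dims j)) ℂ :=
    fun t => LinearMap.toMatrix' ((t ^ s • L c1 + L c2) ∘ₗ (α j).mulVecLin) with hFjdef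
  set Fj1 : ℂ → Matrix (Fin (dims (j+1+1))) (Fin (dims (j+1))) ℂ :=
    fun t => LinearMap.toMatrix' ((α (j+1)).mulVecLin ∘ₗ (L c2 + t ^ pp • L c3)) with hFj1def
  set Apath : ℂ → ∀ i : ℕ, Matrix (Fin (dims (i+1))) (Fin (dims i)) ℂ :=
    fun t => Function.update (Function.update α j (Fj t)) (j+1) (Fj1 t) with hApathdef
  have hAj : ∀ t, Apath t j = Fj t := by
    intro t
    show Function.update (Function.update α j (Fj t)) (j+1) (Fj1 t) j = Fj t
    rw [Function.update_of_ne (by omega : j ≠ j + 1), Function.update_self]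
  have hAj1 : ∀ t, Apath t (j+1) = Fj1 t := by
    intro t
    show Function.update (Function.update α j (Fj t)) (j+1) (Fj1 t) (j+1) = Fj1 t
    rw [Function.update_self]
  have hAother : ∀ t, ∀ i, i ≠ j → i ≠ j + 1 → Apath t i = α i := by
    intro t i h1 h2
    show Function.update (Function.update α j (Fj t)) (j+1) (Fj1 t) i = α i
    rw [Function.update_of_ne h2, Function.update_of_ne h1]
  -- continuity
  have hFjdecomp : ∀ t : ℂ, Fj t = t ^ s • LinearMap.toMatrix' (L c1 ∘ₗ (α j).mulVecLin)
      + LinearMap.toMatrix' (L c2 ∘ₗ (α j).mulVecLin) := by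
    intro t
    show LinearMap.toMatrix' ((t ^ s • L c1 + L c2) ∘ₗ (α j).mulVecLin) = _
    rw [LinearMap.add_comp, LinearMap.smul_comp, map_add, LinearEquiv.map_smul]
  have hFj1decomp : ∀ t : ℂ, Fj1 t = LinearMap.toMatrix' ((α (j+1)).mulVecLin ∘ₗ L c2)
      + t ^ pp • LinearMap.toMatrix' ((α (j+1)).mulVecLin ∘ₗ L c3) := by
    intro t
    show LinearMap.toMatrix' ((α (j+1)).mulVecLin ∘ₗ (L c2 + t ^ pp • L c3)) = _
    rw [LinearMap.comp_add, LinearMap.comp_smul, map_add, LinearEquiv.map_smul]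
  have hcont : Continuous Apath := by
    refine continuous_pi fun i => ?_
    by_cases h1 : i = j + 1
    · subst h1
      have he : (fun t => Apath t (j+1)) = fun t => Fj1 t := funext fun t => hAj1 t
      rw [he]
      have he2 : (fun t : ℂ => Fj1 t) = fun t : ℂ =>
          LinearMap.toMatrix' ((α (j+1)).mulVecLin ∘ₗ L c2)
          + t ^ pp • LinearMap.toMatrix' ((α (j+1)).mulVecLin ∘ₗ L c3) :=
        funext fun t => hFj1decomp t
      rw [he2]
      exact continuous_const.add ((continuous_pow pp).smul continuous_const)
    · rcases eq_or_ne j i with rfl | h2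
      · have he : (fun t => Apath t j) = fun t => Fj t := funext fun t => hAj t
        rw [he]
        have he2 : (fun t : ℂ => Fj t) = fun t : ℂ =>
            t ^ s • LinearMap.toMatrix' (L c1 ∘ₗ (α j).mulVecLin)
            + LinearMap.toMatrix' (L c2 ∘ₗ (α j).mulVecLin) :=
          funext fun t => hFjdecomp t
        rw [he2]
        exact ((continuous_pow s).smul continuous_const).add continuous_const
      · have he : (fun t => Apath t i) = fun _ => α i :=
          funext fun t => hAother t i (Ne.symm h2) h1
        rw [he]
        exact continuous_const
  -- membership in the orbit set for t ≠ 0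
  have hmem : ∀ t : ℂ, t ≠ 0 →
      Apath t ∈ {A : ∀ i : ℕ, Matrix (Fin (dims (i+1))) (Fin (dims i)) ℂ |
        ∃ g : ∀ i : ℕ, Matrix.SpecialLinearGroup (Fin (dims i)) ℂ,
          g (m+1) = 1 ∧
          (∀ i ≤ m, A i = (↑(g (i+1)) : Matrix (Fin (dims (i+1))) (Fin (dims (i+1))) ℂ) *
              α i * (↑((g i)⁻¹) : Matrix (Fin (dims i)) (Fin (dims i)) ℂ)) ∧
          (∀ i, m + 1 ≤ i → A i = α i)} := by
    intro t ht
    let GDt : Matrix.SpecialLinearGroup (Fin (dims (j+1))) ℂ :=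
      ⟨LinearMap.toMatrix' (L (dD t)), hdetD t ht⟩
    let GDtinv : Matrix.SpecialLinearGroup (Fin (dims (j+1))) ℂ :=
      ⟨LinearMap.toMatrix' (L (dDinv t)), hdetDinv t ht⟩
    have hGinv : GDt⁻¹ = GDtinv := by
      apply inv_eq_of_mul_eq_one_right
      apply Subtype.ext
      show LinearMap.toMatrix' (L (dD t)) * LinearMap.toMatrix' (L (dDinv t)) = 1
      rw [← LinearMap.toMatrix'_comp, hLcomp]
      have he : (fun i => dDinv t i * dD t i) = fun _ => (1:ℂ) := by
        funext i; rw [mul_comm]; exact hmulDinvD t ht i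
      rw [he, hLone, LinearMap.toMatrix'_id]
    refine ⟨Function.update (fun i => 1) (j+1) GDt, ?_, ?_, ?_⟩
    · rw [Function.update_of_ne (by omega : m + 1 ≠ j + 1)]
    · intro i hi
      rcases eq_or_ne j i with rfl | hij
      · simp only [hAj, Function.update_self,
          Function.update_of_ne (show j ≠ j + 1 by omega), inv_one,
          Matrix.SpecialLinearGroup.coe_one, Matrix.mul_one]
        show LinearMap.toMatrix' ((t ^ s • L c1 + L c2) ∘ₗ (α j).mulVecLin)
          = LinearMap.toMatrix' (L (dD t)) * α j
        rw [← hEA, LinearMap.toMatrix'_comp, hαjeq]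
      · rcases eq_or_ne (j+1) i with rfl | hij1
        · simp only [hAj1, Function.update_self,
            Function.update_of_ne (show j + 1 + 1 ≠ j + 1 by omega),
            Matrix.SpecialLinearGroup.coe_one, Matrix.one_mul, hGinv]
          show LinearMap.toMatrix' ((α (j+1)).mulVecLin ∘ₗ (L c2 + t ^ pp • L c3))
            = α (j+1) * LinearMap.toMatrix' (L (dDinv t))
          rw [← hEB, LinearMap.toMatrix'_comp, hαj1eq]
        · rw [hAother t i (Ne.symm hij) (Ne.symm hij1)]
          simp only [Function.update_of_ne (show i + 1 ≠ j + 1 by omega),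
            Function.update_of_ne (Ne.symm hij1), inv_one,
            Matrix.SpecialLinearGroup.coe_one, Matrix.one_mul, Matrix.mul_one]
    · intro i hi
      exact hAother t i (by omega) (by omega)
  -- pass to the limit t → 0
  have hA0mem : Apath 0 ∈ {A : ∀ i : ℕ, Matrix (Fin (dims (i+1))) (Fin (dims i)) ℂ |
        ∃ g : ∀ i : ℕ, Matrix.SpecialLinearGroup (Fin (dims i)) ℂ,
          g (m+1) = 1 ∧
          (∀ i ≤ m, A i = (↑(g (i+1)) : Matrix (Fin (dims (i+1))) (Fin (dims (i+1))) ℂ) *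
              α i * (↑((g i)⁻¹) : Matrix (Fin (dims i)) (Fin (dims i)) ℂ)) ∧
          (∀ i, m + 1 ≤ i → A i = α i)} := by
    have htend : Filter.Tendsto Apath (nhdsWithin (0:ℂ) {(0:ℂ)}ᶜ) (nhds (Apath 0)) :=
      (hcont.tendsto 0).mono_left nhdsWithin_le_nhds
    refine hclosed.closure_subset (mem_closure_of_tendsto htend ?_)
    exact Filter.eventually_of_mem self_mem_nhdsWithin fun t ht => hmem t (by simpa using ht)
  -- nontriviality of the weights
  have hs0 : s ≠ 0 := by
    intro h
    have hVmbot : Vm = ⊥ := Submodule.finrank_eq_zero.mp (by rw [← hsdef]; exact h)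
    exact hWtop (by rw [← codisjoint_iff.mp hVm.codisjoint, hVmbot, sup_bot_eq])
  have hpp0 : pp ≠ 0 := by
    intro h
    exact hVpbot (Submodule.finrank_eq_zero.mp (by rw [← hppdef]; exact h))
  -- identify the limit
  set Q := LinearMap.toMatrix' (L c2) with hQdef
  have hQmv : Q.mulVecLin = L c2 := Matrix.toLin'_toMatrix' (L c2)
  have hA0j : Apath 0 j = Q * α j := by
    rw [hAj]
    show LinearMap.toMatrix' (((0:ℂ) ^ s • L c1 + L c2) ∘ₗ (α j).mulVecLin) = _
    rw [zero_pow hs0, zero_smul, zero_add, LinearMap.toMatrix'_comp, hαjeq]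
  have hA0j1 : Apath 0 (j+1) = α (j+1) * Q := by
    rw [hAj1]
    show LinearMap.toMatrix' ((α (j+1)).mulVecLin ∘ₗ (L c2 + (0:ℂ) ^ pp • L c3)) = _
    rw [zero_pow hpp0, zero_smul, add_zero, LinearMap.toMatrix'_comp, hαj1eq]
  obtain ⟨g, hg1, hact, -⟩ := hA0mem
  have h1 := hact j hj.le
  have h2 := hact (j+1) hj
  rw [hA0j] at h1
  rw [hA0j1] at h2
  refine ⟨Q, ?_, ?_, ?_, ?_⟩
  · rw [h1, Matrix.mul_assoc,
      Matrix.rank_mul_eq_right_of_isUnit_det _ _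
        (by rw [Matrix.SpecialLinearGroup.det_coe]; exact isUnit_one),
      Matrix.rank_mul_eq_left_of_isUnit_det _ _
        (by rw [Matrix.SpecialLinearGroup.det_coe]; exact isUnit_one)]
  · rw [h2, Matrix.mul_assoc,
      Matrix.rank_mul_eq_right_of_isUnit_det _ _
        (by rw [Matrix.SpecialLinearGroup.det_coe]; exact isUnit_one),
      Matrix.rank_mul_eq_left_of_isUnit_det _ _
        (by rw [Matrix.SpecialLinearGroup.det_coe]; exact isUnit_one)]
  · rw [show LinearMap.ker Q.mulVecLin = LinearMap.ker (L c2) from by rw [hQmv]]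
    exact hVple c2 fun k => rfl
  · have hle : Q.rank ≤ qq := by
      have hr : LinearMap.range Q.mulVecLin ≤ V0 := by rw [hQmv]; exact hrangeLc2
      calc Q.rank = finrank ℂ (LinearMap.range Q.mulVecLin) := rfl
        _ ≤ finrank ℂ V0 := Submodule.finrank_mono hr
        _ = qq := by rw [← hqqdef]
    omega

/-- (Here the paper's `r` is `m + 1`, so `r ≥ 2` is `1 ≤ m`;
the vector spaces are `V_i = ℂ^(dims i)` with `dims 0 = 0` and
`V_r = ℂ^(dims (m+1)) = ℂ^n`, and the maps of the symplectic quiver are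
`α i : ℂ^(dims i) → ℂ^(dims (i+1))` for `i = 0, …, m`, where `α 0 = 0`
automatically since `dims 0 = 0`.  The group `SL = ∏_{i=1}^{r-1} SL(n_i, ℂ)`
acts by `α_i ↦ g_{i+1} α_i g_i⁻¹` with `g_r = 1`.)

If the `SL`-orbit of `α` is closed in the product matrix space, then for each
`i = 1, …, r−1` (written `i = j+1` with `j < m`) at least one of the following
holds: `α_i` is injective, or `ℂ^(dims i)` is the internal direct sum of the
range of `α_{i−1}` and the kernel of `α_i`, or `α_{i−1}` is surjective. -/
theorem statement2 (m : ℕ) (hm : 1 ≤ m) (dims : ℕ → ℕ) (h0 : dims 0 = 0)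
    (hmono : ∀ i ≤ m, dims i ≤ dims (i+1))
    (α : ∀ i : ℕ, Matrix (Fin (dims (i+1))) (Fin (dims i)) ℂ)
    (hclosed : IsClosed {A : ∀ i : ℕ, Matrix (Fin (dims (i+1))) (Fin (dims i)) ℂ |
        ∃ g : ∀ i : ℕ, Matrix.SpecialLinearGroup (Fin (dims i)) ℂ,
          g (m+1) = 1 ∧
          (∀ i ≤ m, A i = (↑(g (i+1)) : Matrix (Fin (dims (i+1))) (Fin (dims (i+1))) ℂ) *
              α i * (↑((g i)⁻¹) : Matrix (Fin (dims i)) (Fin (dims i)) ℂ)) ∧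
          (∀ i, m + 1 ≤ i → A i = α i)}) :
    ∀ j < m,
      Function.Injective (α (j+1)).mulVecLin ∨
      IsCompl (LinearMap.range (α j).mulVecLin) (LinearMap.ker (α (j+1)).mulVecLin) ∨
      Function.Surjective (α j).mulVecLin := by
  intro j hj
  by_contra hcon
  push_neg at hcon
  obtain ⟨hinj, hcompl, hsurj⟩ := hcon
  set R := LinearMap.range (α j).mulVecLin with hR
  set K := LinearMap.ker (α (j+1)).mulVecLin with hK
  have hKbot : K ≠ ⊥ := fun h => hinj (LinearMap.ker_eq_bot.mp h)
  have hRtop : R ≠ ⊤ := fun h => hsurj (LinearMap.range_eq_top.mp h)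
  have : ¬ (Disjoint R K ∧ Codisjoint R K) := fun ⟨h1, h2⟩ => hcompl ⟨h1, h2⟩
  rw [not_and_or] at this
  rcases this with hdis | hcodis
  · -- Case A : R ⊓ K ≠ ⊥, take Vp = R ⊓ K, W = R
    have hRK : R ⊓ K ≠ ⊥ := fun h => hdis (disjoint_iff.mpr h)
    obtain ⟨Q, hQ1, hQ2, hQker, hQrank⟩ := aux hj α hclosed (R ⊓ K) R inf_le_left hRtop hRK
      inf_le_right le_rfl
    obtain ⟨v, hv, hvne⟩ := Submodule.exists_mem_ne_zero_of_ne_bot hRK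
    obtain ⟨x, hx⟩ := hv.1
    have hxker : x ∈ LinearMap.ker (Q * α j).mulVecLin := by
      rw [LinearMap.mem_ker, Matrix.mulVecLin_mul, LinearMap.comp_apply, hx]
      exact hQker hv
    have hxnker : x ∉ LinearMap.ker (α j).mulVecLin := by
      rw [LinearMap.mem_ker, hx]; exact hvne
    have hlt : LinearMap.ker (α j).mulVecLin < LinearMap.ker (Q * α j).mulVecLin := by
      refine lt_of_le_of_ne ?_ (fun h => hxnker (h ▸ hxker))
      intro y hy
      rw [LinearMap.mem_ker] at hy ⊢
      rw [Matrix.mulVecLin_mul, LinearMap.comp_apply, hy, map_zero]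
    have hfr := Submodule.finrank_lt_finrank_of_lt hlt
    have r1 := LinearMap.finrank_range_add_finrank_ker (α j).mulVecLin
    have r2 := LinearMap.finrank_range_add_finrank_ker (Q * α j).mulVecLin
    have hrk : (Q * α j).rank = finrank ℂ (LinearMap.range (Q * α j).mulVecLin) := rfl
    have hrk2 : (α j).rank = finrank ℂ (LinearMap.range (α j).mulVecLin) := rfl
    rw [← hR] at r1 hrk2
    omega
  · -- Case B : R ⊔ K ≠ ⊤, take Vp = K, W = R ⊔ K
    have hRK : R ⊔ K ≠ ⊤ := fun h => hcodis (codisjoint_iff.mpr h)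
    obtain ⟨Q, hQ1, hQ2, hQker, hQrank⟩ := aux hj α hclosed K (R ⊔ K) le_sup_right hRK hKbot
      le_rfl le_sup_left
    have h1 : (α (j+1) * Q).rank ≤ Q.rank := Matrix.rank_mul_le_right _ _
    have r1 := LinearMap.finrank_range_add_finrank_ker (α (j+1)).mulVecLin
    have hWlt : finrank ℂ ↥(R ⊔ K) < finrank ℂ (Fin (dims (j+1)) → ℂ) :=
      Submodule.finrank_lt hRK
    have hrk : (α (j+1)).rank = finrank ℂ (LinearMap.range (α (j+1)).mulVecLin) := rfl
    rw [← hK] at r1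
    omega
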